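/- In the sign-adaptive SQPRT construction below, with ρ0 ≠ ρ1, the normalized variance of the log-likelihood ratio sum converges: lim_{k→∞} E_0[(S_k − E_0[S_k])²]/k = Var(W_0), where W_0 = log P_{ρ0,m_0*}(U_0) − log P_{ρ1,m_0*}(U_0) with U_0 distributed according to P_{ρ0,m_0*}. -/

import Mathlib

open Filter
open scoped ENNReal ComplexOrder Classical

namespace SQHT

/-- `d × d` complex matrices over an index type `ι`. -/
abbrev Mat (ι : Type) := Matrix ι ι ℂ

variable {d : ℕ}

/-- A quantum state: positive semidefinite with unit trace. -/
def IsState (ρ : Mat (Fin d)) : Prop := ρ.PosSemidef ∧ ρ.trace = 1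

/-- Born probability of outcome `x` when measuring `m` on state `ρ`. -/
noncomputable def outProb (ρ : Mat (Fin d)) (m : Fin d → Mat (Fin d)) (x : Fin d) : ℝ :=
  ((ρ * m x).trace).re

/-- Classical relative entropy (KL divergence) of two pmfs on a finite set,
with the convention `0 log 0 = 0`. -/
noncomputable def KL {X : Type*} [Fintype X] (P Q : X → ℝ) : ℝ :=
  ∑ x, if P x = 0 then 0 else P x * Real.log (P x / Q x)

/-- A rank-one projective measurement with `d` outcomes. -/
def IsRankOnePVM (m : Fin d → Mat (Fin d)) : Prop :=
  (∀ x, (m x).PosSemidef) ∧ ∑ x, m x = 1 ∧ (∀ x, m x * m x = m x) ∧ ∀ x, (m x).rank = 1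

/-- The measured relative entropy `D_M(ρ0‖ρ1)`. -/
noncomputable def Dmeas (ρ0 ρ1 : Mat (Fin d)) : ℝ :=
  ⨆ m : {m : Fin d → Mat (Fin d) // IsRankOnePVM m}, KL (outProb ρ0 m.1) (outProb ρ1 m.1)

/-- Single-outcome log-likelihood ratio for measurement `m`. -/
noncomputable def llr (ρ0 ρ1 : Mat (Fin d)) (m : Fin d → Mat (Fin d)) (x : Fin d) : ℝ :=
  Real.log (outProb ρ0 m x) - Real.log (outProb ρ1 m x)

/-- The sign-adaptive SQPRT dynamics: given the initial coin `b` (`M_1 = m0` if `b`,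
else `M_1 = m1`) and the first `k` outcomes, return the pair consisting of the
measurement `M_{k+1}` to be used next and the current log-likelihood sum `S_k`;
for `k ≥ 1`, `M_{k+1} = m0` if `S_k ≥ 0` and `M_{k+1} = m1` otherwise. -/
noncomputable def run (ρ0 ρ1 : Mat (Fin d)) (m0 m1 : Fin d → Mat (Fin d)) (b : Bool) :
    (k : ℕ) → (Fin k → Fin d) → ((Fin d → Mat (Fin d)) × ℝ)
  | 0, _ => (bif b then m0 else m1, 0)
  | (k + 1), x =>
      let p := run ρ0 ρ1 m0 m1 b k (Fin.init x)
      let Snew := p.2 + llr ρ0 ρ1 p.1 (x (Fin.last k))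
      (if 0 ≤ Snew then m0 else m1, Snew)

/-- The value `S_k` of the accumulated log-likelihood ratio along a path. -/
noncomputable def Sval (ρ0 ρ1 : Mat (Fin d)) (m0 m1 : Fin d → Mat (Fin d)) (b : Bool)
    (k : ℕ) (x : Fin k → Fin d) : ℝ :=
  (run ρ0 ρ1 m0 m1 b k x).2

/-- The probability, when the true state is `ρ`, of the initial coin being `b`
and the first `k` outcomes being `x` (the coin is uniform on two values). -/
noncomputable def pathProb (ρ0 ρ1 : Mat (Fin d)) (m0 m1 : Fin d → Mat (Fin d))
    (ρ : Mat (Fin d)) (b : Bool) : (k : ℕ) → (Fin k → Fin d) → ℝ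
  | 0, _ => 1 / 2
  | (k + 1), x =>
      pathProb ρ0 ρ1 m0 m1 ρ b k (Fin.init x) *
        outProb ρ ((run ρ0 ρ1 m0 m1 b k (Fin.init x)).1) (x (Fin.last k))

/-- Expectation, under the true state `ρ0`, of a path functional after `k` steps. -/
noncomputable def E0 (ρ0 ρ1 : Mat (Fin d)) (m0 m1 : Fin d → Mat (Fin d)) (k : ℕ)
    (f : Bool → (Fin k → Fin d) → ℝ) : ℝ :=
  ∑ b : Bool, ∑ x : Fin k → Fin d, pathProb ρ0 ρ1 m0 m1 ρ0 b k x * f b x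

/-- `P_0(S_k < 0)` for the sign-adaptive SQPRT. -/
noncomputable def probSneg (ρ0 ρ1 : Mat (Fin d)) (m0 m1 : Fin d → Mat (Fin d)) (k : ℕ) : ℝ :=
  ∑ b : Bool, ∑ x : Fin k → Fin d,
    if Sval ρ0 ρ1 m0 m1 b k x < 0 then pathProb ρ0 ρ1 m0 m1 ρ0 b k x else 0

end SQHT

namespace SQHT

/-- The mean of the single-step log-likelihood ratio `W₀` under `P_{ρ0,m0}`. -/
noncomputable def meanW0 {d : ℕ} (ρ0 ρ1 : Mat (Fin d)) (m0 : Fin d → Mat (Fin d)) : ℝ :=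
  ∑ x : Fin d, outProb ρ0 m0 x * llr ρ0 ρ1 m0 x

/-- The variance of `W₀ = log P_{ρ0,m0}(U₀) − log P_{ρ1,m0}(U₀)`, where `U₀` is
distributed according to `P_{ρ0,m0}`. -/
noncomputable def varW0 {d : ℕ} (ρ0 ρ1 : Mat (Fin d)) (m0 : Fin d → Mat (Fin d)) : ℝ :=
  ∑ x : Fin d, outProb ρ0 m0 x * (llr ρ0 ρ1 m0 x - meanW0 ρ0 ρ1 m0) ^ 2

-- ==== AUX INSERT ====
-- ==== AUX START ====
open Matrix

section MatrixFacts

lemma psd_eq_conjTranspose_mul_self {A : Mat (Fin d)} (hA : A.PosSemidef) :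
    ∃ B : Mat (Fin d), A = Bᴴ * B := by
  open scoped MatrixOrder Matrix.Norms.L2Operator in
  obtain ⟨B, hB⟩ := CStarAlgebra.nonneg_iff_eq_star_mul_self.mp hA.nonneg
  exact ⟨B, hB⟩

lemma trace_re_conjTranspose_mul_self (B : Mat (Fin d)) :
    ((Bᴴ * B).trace).re = ∑ i : Fin d, ∑ j : Fin d, Complex.normSq (B j i) := by
  simp only [Matrix.trace, Matrix.diag, Matrix.mul_apply, Matrix.conjTranspose_apply]
  rw [Complex.re_sum]
  refine Finset.sum_congr rfl fun i _ => ?_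
  rw [Complex.re_sum]
  refine Finset.sum_congr rfl fun j _ => ?_
  rw [mul_comm]
  simp [Complex.mul_conj]

lemma psd_trace_re_nonneg {A : Mat (Fin d)} (hA : A.PosSemidef) : 0 ≤ (A.trace).re := by
  obtain ⟨B, rfl⟩ := psd_eq_conjTranspose_mul_self hA
  rw [trace_re_conjTranspose_mul_self]
  exact Finset.sum_nonneg fun i _ => Finset.sum_nonneg fun j _ => Complex.normSq_nonneg _

lemma psd_trace_re_pos {A : Mat (Fin d)} (hA : A.PosSemidef) (h0 : A ≠ 0) : 0 < (A.trace).re := by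
  obtain ⟨B, rfl⟩ := psd_eq_conjTranspose_mul_self hA
  rw [trace_re_conjTranspose_mul_self]
  have hB : B ≠ 0 := by rintro rfl; simp at h0
  obtain ⟨j, i, hij⟩ : ∃ j i, B j i ≠ 0 := by
    by_contra h
    push_neg at h
    exact hB (by ext j i; simpa using h j i)
  refine Finset.sum_pos' (fun i _ => Finset.sum_nonneg fun j _ => Complex.normSq_nonneg _) ?_
  refine ⟨i, Finset.mem_univ _,
    Finset.sum_pos' (fun j _ => Complex.normSq_nonneg _) ⟨j, Finset.mem_univ _, ?_⟩⟩
  simpa [Complex.normSq_pos] using hij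

lemma psd_mul_trace_re_nonneg {A N : Mat (Fin d)} (hA : A.PosSemidef) (hN : N.PosSemidef) :
    0 ≤ ((A * N).trace).re := by
  obtain ⟨B, rfl⟩ := psd_eq_conjTranspose_mul_self hN
  rw [← mul_assoc, Matrix.trace_mul_cycle]
  exact psd_trace_re_nonneg (hA.mul_mul_conjTranspose_same B)

lemma conj_psd {A : Mat (Fin d)} (hA : A.PosSemidef) (U : Mat (Fin d)) :
    (U * A * star U).PosSemidef := by
  simpa [Matrix.star_eq_conjTranspose] using hA.mul_mul_conjTranspose_same U

lemma exists_eig_bounds (hd : 0 < d) {ρ : Mat (Fin d)} (hρ : ρ.PosDef) :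
    ∃ c C : ℝ, 0 < c ∧ 0 < C ∧ (ρ - (c:ℂ) • 1).PosSemidef ∧ ((C:ℂ) • 1 - ρ).PosSemidef := by
  haveI : Nonempty (Fin d) := Fin.pos_iff_nonempty.mp hd
  classical
  have h : ρ.IsHermitian := hρ.1
  set U : Mat (Fin d) := (h.eigenvectorUnitary : Mat (Fin d)) with hU
  have hUU : U * star U = 1 := (Matrix.mem_unitaryGroup_iff).mp h.eigenvectorUnitary.2
  have hspec : ρ = U * Matrix.diagonal (RCLike.ofReal ∘ h.eigenvalues) * star U :=
    h.spectral_theorem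
  set c : ℝ := Finset.univ.inf' Finset.univ_nonempty h.eigenvalues with hc
  set C : ℝ := Finset.univ.sup' Finset.univ_nonempty h.eigenvalues with hC
  have hcpos : 0 < c := by
    rw [hc, Finset.lt_inf'_iff]
    exact fun i _ => hρ.eigenvalues_pos i
  have hCpos : 0 < C := by
    obtain ⟨i⟩ := (inferInstance : Nonempty (Fin d))
    exact lt_of_lt_of_le (hρ.eigenvalues_pos i) (Finset.le_sup' _ (Finset.mem_univ i))
  have hsm : ∀ r : ℝ, (r:ℂ) • (1 : Mat (Fin d)) = U * ((r:ℂ) • 1) * star U := by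
    intro r
    rw [Matrix.mul_smul, Matrix.smul_mul, mul_one, hUU]
  refine ⟨c, C, hcpos, hCpos, ?_, ?_⟩
  · have h1 : ρ - (c:ℂ) • 1 =
        U * (Matrix.diagonal (RCLike.ofReal ∘ h.eigenvalues) - (c:ℂ) • 1) * star U := by
      rw [Matrix.mul_sub, Matrix.sub_mul, ← hspec, ← hsm]
    rw [h1]
    refine conj_psd ?_ U
    have h2 : Matrix.diagonal (RCLike.ofReal ∘ h.eigenvalues) - (c:ℂ) • (1 : Mat (Fin d)) =
        Matrix.diagonal (fun i => ((h.eigenvalues i - c : ℝ) : ℂ)) := by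
      rw [Matrix.smul_one_eq_diagonal, Matrix.diagonal_sub]
      funext i
      simp
    rw [h2, Matrix.posSemidef_diagonal_iff]
    intro i
    rw [Complex.zero_le_real]
    simp only [sub_nonneg, hc]
    exact Finset.inf'_le _ (Finset.mem_univ i)
  · have h1 : (C:ℂ) • (1 : Mat (Fin d)) - ρ =
        U * ((C:ℂ) • 1 - Matrix.diagonal (RCLike.ofReal ∘ h.eigenvalues)) * star U := by
      rw [Matrix.mul_sub, Matrix.sub_mul, ← hspec, ← hsm]
    rw [h1]
    refine conj_psd ?_ U
    have h2 : (C:ℂ) • (1 : Mat (Fin d)) - Matrix.diagonal (RCLike.ofReal ∘ h.eigenvalues) =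
        Matrix.diagonal (fun i => ((C - h.eigenvalues i : ℝ) : ℂ)) := by
      rw [Matrix.smul_one_eq_diagonal, Matrix.diagonal_sub]
      funext i
      simp
    rw [h2, Matrix.posSemidef_diagonal_iff]
    intro i
    rw [Complex.zero_le_real]
    simp only [sub_nonneg, hC]
    exact Finset.le_sup' _ (Finset.mem_univ i)

lemma trace_smul_one_mul_re (r : ℝ) (N : Mat (Fin d)) :
    ((((r:ℂ) • (1 : Mat (Fin d))) * N).trace).re = r * (N.trace).re := by
  rw [Matrix.smul_mul, one_mul, Matrix.trace_smul]
  simp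

lemma trace_mul_re_le {ρ N : Mat (Fin d)} {C : ℝ} (hN : N.PosSemidef)
    (hub : ((C:ℂ) • 1 - ρ).PosSemidef) : ((ρ * N).trace).re ≤ C * (N.trace).re := by
  have h := psd_mul_trace_re_nonneg hub hN
  rw [Matrix.sub_mul, Matrix.trace_sub] at h
  rw [Complex.sub_re, trace_smul_one_mul_re] at h
  linarith

lemma le_trace_mul_re {ρ N : Mat (Fin d)} {c : ℝ} (hN : N.PosSemidef)
    (hlb : (ρ - (c:ℂ) • 1).PosSemidef) : c * (N.trace).re ≤ ((ρ * N).trace).re := by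
  have h := psd_mul_trace_re_nonneg hlb hN
  rw [Matrix.sub_mul, Matrix.trace_sub] at h
  rw [Complex.sub_re, trace_smul_one_mul_re] at h
  linarith

end MatrixFacts

section ProbFacts

lemma outProb_nonneg {ρ : Mat (Fin d)} (hρ : ρ.PosSemidef) {m : Fin d → Mat (Fin d)}
    (hm : ∀ x, (m x).PosSemidef) (x : Fin d) : 0 ≤ outProb ρ m x :=
  psd_mul_trace_re_nonneg hρ (hm x)

lemma outProb_pos {ρ : Mat (Fin d)} (hρ : ρ.PosDef) {m : Fin d → Mat (Fin d)}
    (hm : ∀ x, (m x).PosSemidef) (hm0 : ∀ x, m x ≠ 0) (x : Fin d) : 0 < outProb ρ m x := by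
  rcases Nat.eq_zero_or_pos d with h | h
  · subst h; exact absurd (by ext i j; exact absurd i.2 (by simp)) (hm0 x)
  obtain ⟨c, C, hc, hC, hlb, hub⟩ := exists_eig_bounds h hρ
  have := le_trace_mul_re (hm x) hlb
  have htr : 0 < ((m x).trace).re := psd_trace_re_pos (hm x) (hm0 x)
  have : 0 < c * ((m x).trace).re := mul_pos hc htr
  unfold outProb
  linarith [le_trace_mul_re (hm x) hlb]

lemma sum_outProb {ρ : Mat (Fin d)} (hρ : IsState ρ) {m : Fin d → Mat (Fin d)}
    (hm : ∑ x, m x = 1) : ∑ x, outProb ρ m x = 1 := by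
  unfold outProb
  rw [← Complex.re_sum, ← Matrix.trace_sum]
  have : ∑ x, ρ * m x = ρ * ∑ x, m x := by rw [Finset.mul_sum]
  rw [this, hm, mul_one, hρ.2]
  simp

end ProbFacts

section Gibbs

lemma gibbs_pointwise {p q : ℝ} (hp : 0 < p) (hq : 0 < q) :
    p - q ≤ p * (Real.log p - Real.log q) := by
  have h := Real.log_le_sub_one_of_pos (div_pos hq hp)
  rw [Real.log_div (ne_of_gt hq) (ne_of_gt hp)] at h
  have h2 := mul_le_mul_of_nonneg_left h (le_of_lt hp)
  have h3 : p * (q / p) = q := by field_simp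
  nlinarith [h2, h3]

lemma gibbs_pointwise_strict {p q : ℝ} (hp : 0 < p) (hq : 0 < q) (hne : p ≠ q) :
    p - q < p * (Real.log p - Real.log q) := by
  have hne' : q / p ≠ 1 := by
    intro h
    exact hne ((div_eq_one_iff_eq (ne_of_gt hp)).mp h).symm
  have h := Real.log_lt_sub_one_of_pos (div_pos hq hp) hne'
  rw [Real.log_div (ne_of_gt hq) (ne_of_gt hp)] at h
  have h2 := mul_lt_mul_of_pos_left h hp
  have h3 : p * (q / p) = q := by field_simp
  nlinarith [h2, h3]

lemma gibbs_nonneg {P Q : Fin d → ℝ} (hP : ∀ x, 0 < P x) (hQ : ∀ x, 0 < Q x)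
    (hPs : ∑ x, P x = 1) (hQs : ∑ x, Q x = 1) :
    0 ≤ ∑ x, P x * (Real.log (P x) - Real.log (Q x)) := by
  have h : ∑ x, (P x - Q x) ≤ ∑ x, P x * (Real.log (P x) - Real.log (Q x)) :=
    Finset.sum_le_sum fun x _ => gibbs_pointwise (hP x) (hQ x)
  rw [Finset.sum_sub_distrib, hPs, hQs] at h
  linarith

lemma gibbs_pos {P Q : Fin d → ℝ} (hP : ∀ x, 0 < P x) (hQ : ∀ x, 0 < Q x)
    (hPs : ∑ x, P x = 1) (hQs : ∑ x, Q x = 1) (hne : P ≠ Q) :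
    0 < ∑ x, P x * (Real.log (P x) - Real.log (Q x)) := by
  obtain ⟨x0, hx0⟩ : ∃ x, P x ≠ Q x := by
    by_contra h; push_neg at h; exact hne (funext h)
  have h : ∑ x, (P x - Q x) < ∑ x, P x * (Real.log (P x) - Real.log (Q x)) := by
    refine Finset.sum_lt_sum (fun x _ => gibbs_pointwise (hP x) (hQ x))
      ⟨x0, Finset.mem_univ _, gibbs_pointwise_strict (hP x0) (hQ x0) hx0⟩
  rw [Finset.sum_sub_distrib, hPs, hQs] at h
  linarith

lemma KL_eq_sum {P Q : Fin d → ℝ} (hP : ∀ x, 0 < P x) (hQ : ∀ x, 0 < Q x) :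
    KL P Q = ∑ x, P x * (Real.log (P x) - Real.log (Q x)) := by
  unfold KL
  refine Finset.sum_congr rfl fun x _ => ?_
  rw [if_neg (ne_of_gt (hP x)), Real.log_div (ne_of_gt (hP x)) (ne_of_gt (hQ x))]

end Gibbs

section PVM

lemma vecMulVec_mulVec (v w y : Fin d → ℂ) :
    (Matrix.vecMulVec v w) *ᵥ y = (w ⬝ᵥ y) • v := by
  funext i
  simp only [Matrix.mulVec, dotProduct, Matrix.vecMulVec_apply, Pi.smul_apply,
    smul_eq_mul]
  rw [Finset.sum_mul]
  refine Finset.sum_congr rfl fun j _ => by ring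

lemma posSemidef_vecMulVec_star (v : Fin d → ℂ) :
    (Matrix.vecMulVec v (star v)).PosSemidef := by
  refine Matrix.posSemidef_iff_dotProduct_mulVec.mpr ⟨?_, ?_⟩
  · ext i j
    simp only [Matrix.conjTranspose_apply, Matrix.vecMulVec_apply, Pi.star_apply, star_mul',
      star_star]
    ring
  · intro y
    rw [vecMulVec_mulVec]
    rw [dotProduct_smul]
    have hz : (star y) ⬝ᵥ v = star ((star v) ⬝ᵥ y) := by
      simp only [dotProduct, Pi.star_apply, star_sum, star_mul', star_star]
      refine Finset.sum_congr rfl fun j _ => by ring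
    rw [hz, smul_eq_mul, Complex.star_def, Complex.mul_conj]
    rw [Complex.zero_le_real]
    exact Complex.normSq_nonneg _

lemma trace_mul_vecMulVec' (B : Mat (Fin d)) (v w : Fin d → ℂ) :
    (B * Matrix.vecMulVec v w).trace = w ⬝ᵥ (B *ᵥ v) := by
  simp only [Matrix.trace, Matrix.diag, Matrix.mul_apply, Matrix.vecMulVec_apply,
    dotProduct, Matrix.mulVec]
  refine Finset.sum_congr rfl fun i _ => ?_
  rw [Finset.mul_sum]
  refine Finset.sum_congr rfl fun j _ => by ring

lemma rank_pos_of_ne_zero {A : Mat (Fin d)} (h : A ≠ 0) : 0 < A.rank := by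
  obtain ⟨i, j, hij⟩ : ∃ i j, A i j ≠ 0 := by
    by_contra hc
    push_neg at hc
    exact h (by ext i j; simpa using hc i j)
  rw [Matrix.rank]
  have hx : A.mulVecLin (Pi.single j 1) ≠ 0 := by
    intro hcontra
    have := congrFun hcontra i
    simp only [Matrix.mulVecLin_apply, Matrix.mulVec_single_one, Matrix.col_apply, Pi.zero_apply] at this
    exact hij this
  haveI : Nontrivial (LinearMap.range A.mulVecLin) :=
    ⟨⟨⟨_, LinearMap.mem_range_self _ (Pi.single j 1)⟩, 0, by
      intro hcontra
      apply hx
      simpa [Subtype.ext_iff] using hcontra⟩⟩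
  exact Module.finrank_pos_iff.mpr this

lemma rank_vecMulVec_le_one (v w : Fin d → ℂ) : (Matrix.vecMulVec v w).rank ≤ 1 := by
  rw [Matrix.vecMulVec_eq (Fin 1)]
  refine le_trans (Matrix.rank_mul_le_left _ _) ?_
  have h := Matrix.rank_le_card_width (Matrix.replicateCol (Fin 1) v)
  simp at h
  exact h

/-- From a Hermitian matrix difference, an eigenbasis rank-one PVM. -/
lemma exists_distinguishing_pvm (hd : 0 < d) {ρa ρb : Mat (Fin d)}
    (ha : ρa.IsHermitian) (hb : ρb.IsHermitian) (hne : ρa ≠ ρb) :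
    ∃ m : Fin d → Mat (Fin d), IsRankOnePVM m ∧ outProb ρa m ≠ outProb ρb m := by
  classical
  set A : Mat (Fin d) := ρa - ρb with hA
  have hAh : A.IsHermitian := ha.sub hb
  have hAne : A ≠ 0 := sub_ne_zero_of_ne hne
  set U : Mat (Fin d) := (hAh.eigenvectorUnitary : Mat (Fin d)) with hU
  have hUU : U * star U = 1 := (Matrix.mem_unitaryGroup_iff).mp hAh.eigenvectorUnitary.2
  have hsUU : star U * U = 1 := by
    rw [mul_eq_one_comm] at hUU
    exact hUU
  set v : Fin d → (Fin d → ℂ) := fun x i => U i x with hv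
  have hnorm : ∀ x, (star (v x)) ⬝ᵥ (v x) = 1 := by
    intro x
    have := congrFun (congrFun hsUU x) x
    simp only [Matrix.mul_apply, Matrix.one_apply_eq, Matrix.star_apply] at this
    simpa [dotProduct, hv] using this
  set m : Fin d → Mat (Fin d) := fun x => Matrix.vecMulVec (v x) (star (v x)) with hm
  have hpsd : ∀ x, (m x).PosSemidef := fun x => posSemidef_vecMulVec_star (v x)
  have hvne : ∀ x, v x ≠ 0 := by
    intro x hcontra
    have := hnorm x
    rw [hcontra] at this
    simp [dotProduct] at this
  have hmne : ∀ x, m x ≠ 0 := by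
    intro x hc
    obtain ⟨i, hi⟩ : ∃ i, v x i ≠ 0 := by
      by_contra hcc; push_neg at hcc; exact hvne x (funext hcc)
    have h2 : v x i * star (v x i) = 0 := by
      have := congrFun (congrFun hc i) i
      simpa [hm, Matrix.vecMulVec_apply] using this
    rcases mul_eq_zero.mp h2 with h | h
    · exact hi h
    · exact hi (by simpa using star_eq_zero.mp h)
  have hsum : ∑ x, m x = 1 := by
    rw [← hUU]
    ext i j
    simp only [hm, Matrix.sum_apply, Matrix.vecMulVec_apply, Pi.star_apply, Matrix.mul_apply,
      Matrix.star_apply, hv]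
  have hproj : ∀ x, m x * m x = m x := by
    intro x
    ext i j
    simp only [hm, Matrix.mul_apply, Matrix.vecMulVec_apply, Pi.star_apply]
    have : ∑ k, (v x i * star (v x k)) * (v x k * star (v x j))
        = (v x i * star (v x j)) * ((star (v x)) ⬝ᵥ (v x)) := by
      rw [dotProduct, Finset.mul_sum]
      refine Finset.sum_congr rfl fun k _ => by simp; ring
    rw [this, hnorm x, mul_one]
  have hrank : ∀ x, (m x).rank = 1 := by
    intro x
    have h1 : (m x).rank ≤ 1 := rank_vecMulVec_le_one (v x) (star (v x))
    have h2 : 0 < (m x).rank := rank_pos_of_ne_zero (hmne x)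
    omega
  refine ⟨m, ⟨hpsd, hsum, hproj, hrank⟩, ?_⟩
  have heig : ∀ x, ((A * m x).trace).re = hAh.eigenvalues x := by
    intro x
    rw [hm, trace_mul_vecMulVec']
    have hAv : A *ᵥ (v x) = (hAh.eigenvalues x : ℂ) • (v x) := by
      have h1 := hAh.mulVec_eigenvectorBasis x
      have h2 : v x = ⇑(hAh.eigenvectorBasis x) := by
        funext i
        rw [hv]
        exact hAh.eigenvectorUnitary_apply i x
      rw [h2]
      rw [h1]
      funext i
      simp [RCLike.real_smul_eq_coe_smul (K := ℂ)]
    rw [hAv, dotProduct_smul, hnorm x]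
    simp
  obtain ⟨x0, hx0⟩ : ∃ x, hAh.eigenvalues x ≠ 0 := by
    by_contra hc
    push_neg at hc
    apply hAne
    have := hAh.spectral_theorem
    rw [this]
    have : Matrix.diagonal (RCLike.ofReal ∘ hAh.eigenvalues) = (0 : Mat (Fin d)) := by
      ext i j
      by_cases h : i = j <;> simp [Matrix.diagonal, h, hc]
    rw [this, map_zero]
  intro hPQ
  apply hx0
  have := congrFun hPQ x0
  rw [← heig x0]
  unfold outProb at this
  rw [hA, Matrix.sub_mul, Matrix.trace_sub, Complex.sub_re, this]
  ring

end PVM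

section Dmeas

lemma outProb_pos_of_pvm {ρ : Mat (Fin d)} (hρ : ρ.PosDef) {m : Fin d → Mat (Fin d)}
    (hm : IsRankOnePVM m) (x : Fin d) : 0 < outProb ρ m x := by
  refine outProb_pos hρ hm.1 (fun y hy => ?_) x
  have := hm.2.2.2 y
  rw [hy, Matrix.rank_zero] at this
  exact absurd this.symm one_ne_zero

lemma KL_bddAbove (hd : 0 < d) {ρa ρb : Mat (Fin d)} (ha : IsState ρa)
    (hfa : ρa.PosDef) (hfb : ρb.PosDef) :
    BddAbove (Set.range fun m : {m : Fin d → Mat (Fin d) // IsRankOnePVM m} =>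
      KL (outProb ρa m.1) (outProb ρb m.1)) := by
  obtain ⟨ca, Ca, hca, hCa, hlba, huba⟩ := exists_eig_bounds hd hfa
  obtain ⟨cb, Cb, hcb, hCb, hlbb, hubb⟩ := exists_eig_bounds hd hfb
  refine ⟨Real.log (Ca / cb), ?_⟩
  rintro r ⟨⟨m, hm⟩, rfl⟩
  have hP : ∀ x, 0 < outProb ρa m x := outProb_pos_of_pvm hfa hm
  have hQ : ∀ x, 0 < outProb ρb m x := outProb_pos_of_pvm hfb hm
  show KL (outProb ρa m) (outProb ρb m) ≤ Real.log (Ca / cb)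
  rw [KL_eq_sum hP hQ]
  have hbound : ∀ x, Real.log (outProb ρa m x) - Real.log (outProb ρb m x)
      ≤ Real.log (Ca / cb) := by
    intro x
    rw [← Real.log_div (ne_of_gt (hP x)) (ne_of_gt (hQ x))]
    have htx : 0 < ((m x).trace).re := by
      have h1 := trace_mul_re_le (hm.1 x) hubb
      have hQ' : 0 < ((ρb * m x).trace).re := hQ x
      nlinarith [hQ', hCb, h1]
    refine Real.log_le_log (div_pos (hP x) (hQ x)) ?_
    have h1 : outProb ρa m x ≤ Ca * ((m x).trace).re := trace_mul_re_le (hm.1 x) huba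
    have h2 : cb * ((m x).trace).re ≤ outProb ρb m x := le_trace_mul_re (hm.1 x) hlbb
    rw [div_le_div_iff₀ (hQ x) hcb]
    nlinarith [hP x, hQ x, htx, hca, hcb, hCa, h1, h2]
  calc ∑ x, outProb ρa m x * (Real.log (outProb ρa m x) - Real.log (outProb ρb m x))
      ≤ ∑ x, outProb ρa m x * Real.log (Ca / cb) :=
        Finset.sum_le_sum fun x _ => mul_le_mul_of_nonneg_left (hbound x) (le_of_lt (hP x))
    _ = Real.log (Ca / cb) := by
        rw [← Finset.sum_mul, sum_outProb ha hm.2.1, one_mul]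

lemma dmeas_pos (hd : 0 < d) {ρa ρb : Mat (Fin d)} (ha : IsState ρa) (hb : IsState ρb)
    (hfa : ρa.PosDef) (hfb : ρb.PosDef) (hne : ρa ≠ ρb) : 0 < Dmeas ρa ρb := by
  obtain ⟨m, hm, hPQ⟩ := exists_distinguishing_pvm hd hfa.1 hfb.1 hne
  have hP : ∀ x, 0 < outProb ρa m x := outProb_pos_of_pvm hfa hm
  have hQ : ∀ x, 0 < outProb ρb m x := outProb_pos_of_pvm hfb hm
  have hKL : 0 < KL (outProb ρa m) (outProb ρb m) := by
    rw [KL_eq_sum hP hQ]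
    exact gibbs_pos hP hQ (sum_outProb ha hm.2.1) (sum_outProb hb hm.2.1) hPQ
  refine lt_of_lt_of_le hKL ?_
  exact le_ciSup (KL_bddAbove hd ha hfa hfb) (⟨m, hm⟩ : {m // IsRankOnePVM m})

end Dmeas


-- ==== DYNAMICS AUX ====
section Dynamics

variable {ρ0 ρ1 : Mat (Fin d)} {m0 m1 : Fin d → Mat (Fin d)}

lemma sum_snoc {k : ℕ} (f : (Fin (k + 1) → Fin d) → ℝ) :
    ∑ x : Fin (k + 1) → Fin d, f x = ∑ y : Fin k → Fin d, ∑ a : Fin d, f (Fin.snoc y a) := by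
  classical
  let e : ((Fin k → Fin d) × Fin d) ≃ (Fin (k + 1) → Fin d) :=
    { toFun := fun p => Fin.snoc p.1 p.2
      invFun := fun x => (Fin.init x, x (Fin.last k))
      left_inv := fun p => by simp
      right_inv := fun x => by simp }
  rw [← Equiv.sum_comp e f, Fintype.sum_prod_type]
  exact Finset.sum_congr rfl fun y _ => Finset.sum_congr rfl fun a _ => rfl

lemma run_fst_mem (b : Bool) (k : ℕ) (x : Fin k → Fin d) :
    (run ρ0 ρ1 m0 m1 b k x).1 = m0 ∨ (run ρ0 ρ1 m0 m1 b k x).1 = m1 := by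
  cases k with
  | zero => cases b <;> simp [run]
  | succ k =>
      rw [run]
      by_cases h : 0 ≤ (run ρ0 ρ1 m0 m1 b k (Fin.init x)).2
          + llr ρ0 ρ1 (run ρ0 ρ1 m0 m1 b k (Fin.init x)).1 (x (Fin.last k))
      · left; simp [h]
      · right; simp [h]

lemma Sval_snoc (b : Bool) (k : ℕ) (y : Fin k → Fin d) (a : Fin d) :
    Sval ρ0 ρ1 m0 m1 b (k + 1) (Fin.snoc y a)
      = Sval ρ0 ρ1 m0 m1 b k y + llr ρ0 ρ1 ((run ρ0 ρ1 m0 m1 b k y).1) a := by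
  rw [Sval, run]
  simp [Sval]

lemma run_fst_succ (b : Bool) (k : ℕ) (x : Fin (k + 1) → Fin d) :
    (run ρ0 ρ1 m0 m1 b (k + 1) x).1
      = if 0 ≤ Sval ρ0 ρ1 m0 m1 b (k + 1) x then m0 else m1 := by
  rw [Sval, run]

lemma Sval_zero (b : Bool) (x : Fin 0 → Fin d) : Sval ρ0 ρ1 m0 m1 b 0 x = 0 := rfl

lemma Sval_neg_of_ne (b : Bool) (k : ℕ) (x : Fin (k + 1) → Fin d)
    (h : (run ρ0 ρ1 m0 m1 b (k + 1) x).1 ≠ m0) : Sval ρ0 ρ1 m0 m1 b (k + 1) x < 0 := by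
  by_contra hc
  push_neg at hc
  rw [run_fst_succ, if_pos hc] at h
  exact h rfl

lemma pathProb_snoc (ρ : Mat (Fin d)) (b : Bool) (k : ℕ) (y : Fin k → Fin d) (a : Fin d) :
    pathProb ρ0 ρ1 m0 m1 ρ b (k + 1) (Fin.snoc y a)
      = pathProb ρ0 ρ1 m0 m1 ρ b k y * outProb ρ ((run ρ0 ρ1 m0 m1 b k y).1) a := by
  rw [pathProb]
  simp

lemma run_psd (hm0 : IsRankOnePVM m0) (hm1 : IsRankOnePVM m1) (b : Bool) (k : ℕ)
    (x : Fin k → Fin d) : ∀ y, ((run ρ0 ρ1 m0 m1 b k x).1 y).PosSemidef := by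
  rcases run_fst_mem b k x (ρ0 := ρ0) (ρ1 := ρ1) (m0 := m0) (m1 := m1) with h | h <;> rw [h]
  · exact hm0.1
  · exact hm1.1

lemma pathProb_nonneg {ρ : Mat (Fin d)} (hρ : ρ.PosSemidef) (hm0 : IsRankOnePVM m0)
    (hm1 : IsRankOnePVM m1) (b : Bool) (k : ℕ) (x : Fin k → Fin d) :
    0 ≤ pathProb ρ0 ρ1 m0 m1 ρ b k x := by
  induction k with
  | zero => rw [pathProb]; norm_num
  | succ k ih =>
      rw [pathProb]
      exact mul_nonneg (ih _) (outProb_nonneg hρ (run_psd hm0 hm1 b k _) _)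

lemma sum_q_one (h0 : IsState ρ0) (hm0 : IsRankOnePVM m0) (hm1 : IsRankOnePVM m1)
    (b : Bool) (k : ℕ) (x : Fin k → Fin d) :
    ∑ a : Fin d, outProb ρ0 ((run ρ0 ρ1 m0 m1 b k x).1) a = 1 := by
  rcases run_fst_mem b k x (ρ0 := ρ0) (ρ1 := ρ1) (m0 := m0) (m1 := m1) with h | h <;> rw [h]
  · exact sum_outProb h0 hm0.2.1
  · exact sum_outProb h0 hm1.2.1

lemma E0_succ (k : ℕ) (f : Bool → (Fin (k + 1) → Fin d) → ℝ) :
    E0 ρ0 ρ1 m0 m1 (k + 1) f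
      = ∑ b : Bool, ∑ y : Fin k → Fin d, pathProb ρ0 ρ1 m0 m1 ρ0 b k y *
          ∑ a : Fin d, outProb ρ0 ((run ρ0 ρ1 m0 m1 b k y).1) a * f b (Fin.snoc y a) := by
  rw [E0]
  refine Finset.sum_congr rfl fun b _ => ?_
  rw [sum_snoc (fun x => pathProb ρ0 ρ1 m0 m1 ρ0 b (k + 1) x * f b x)]
  refine Finset.sum_congr rfl fun y _ => ?_
  rw [Finset.mul_sum]
  refine Finset.sum_congr rfl fun a _ => ?_
  rw [pathProb_snoc]
  ring

lemma E0_add (k : ℕ) (f g : Bool → (Fin k → Fin d) → ℝ) :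
    E0 ρ0 ρ1 m0 m1 k (fun b x => f b x + g b x) = E0 ρ0 ρ1 m0 m1 k f + E0 ρ0 ρ1 m0 m1 k g := by
  simp only [E0, mul_add, Finset.sum_add_distrib]

lemma E0_smul (k : ℕ) (c : ℝ) (f : Bool → (Fin k → Fin d) → ℝ) :
    E0 ρ0 ρ1 m0 m1 k (fun b x => c * f b x) = c * E0 ρ0 ρ1 m0 m1 k f := by
  simp only [E0, Finset.mul_sum]
  refine Finset.sum_congr rfl fun b _ => Finset.sum_congr rfl fun x _ => by ring

lemma E0_congr (k : ℕ) {f g : Bool → (Fin k → Fin d) → ℝ} (h : ∀ b x, f b x = g b x) :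
    E0 ρ0 ρ1 m0 m1 k f = E0 ρ0 ρ1 m0 m1 k g := by
  unfold E0
  exact Finset.sum_congr rfl fun b _ => Finset.sum_congr rfl fun x _ => by rw [h]

lemma E0_const (h0 : IsState ρ0) (hm0 : IsRankOnePVM m0) (hm1 : IsRankOnePVM m1)
    (k : ℕ) (c : ℝ) : E0 ρ0 ρ1 m0 m1 k (fun _ _ => c) = c := by
  induction k with
  | zero =>
      rw [E0]
      norm_num [pathProb]
      ring
  | succ k ih =>
      rw [E0_succ]
      have : ∀ (b : Bool) (y : Fin k → Fin d),
          ∑ a : Fin d, outProb ρ0 ((run ρ0 ρ1 m0 m1 b k y).1) a * c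
            = (1 : ℝ) * c := by
        intro b y
        rw [← Finset.sum_mul, sum_q_one h0 hm0 hm1]
      calc ∑ b : Bool, ∑ y : Fin k → Fin d, pathProb ρ0 ρ1 m0 m1 ρ0 b k y *
            ∑ a : Fin d, outProb ρ0 ((run ρ0 ρ1 m0 m1 b k y).1) a * c
          = ∑ b : Bool, ∑ y : Fin k → Fin d, pathProb ρ0 ρ1 m0 m1 ρ0 b k y * ((1:ℝ) * c) := by
            refine Finset.sum_congr rfl fun b _ => Finset.sum_congr rfl fun y _ => ?_
            rw [this]
      _ = c := by
            simp only [one_mul]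
            exact ih

lemma E0_mono (h0 : IsState ρ0) (hm0 : IsRankOnePVM m0) (hm1 : IsRankOnePVM m1)
    (k : ℕ) {f g : Bool → (Fin k → Fin d) → ℝ} (h : ∀ b x, f b x ≤ g b x) :
    E0 ρ0 ρ1 m0 m1 k f ≤ E0 ρ0 ρ1 m0 m1 k g := by
  unfold E0
  refine Finset.sum_le_sum fun b _ => Finset.sum_le_sum fun x _ => ?_
  exact mul_le_mul_of_nonneg_left (h b x) (pathProb_nonneg h0.1 hm0 hm1 b k x)

lemma E0_nonneg (h0 : IsState ρ0) (hm0 : IsRankOnePVM m0) (hm1 : IsRankOnePVM m1)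
    (k : ℕ) {f : Bool → (Fin k → Fin d) → ℝ} (h : ∀ b x, 0 ≤ f b x) :
    0 ≤ E0 ρ0 ρ1 m0 m1 k f := by
  unfold E0
  refine Finset.sum_nonneg fun b _ => Finset.sum_nonneg fun x _ => ?_
  exact mul_nonneg (pathProb_nonneg h0.1 hm0 hm1 b k x) (h b x)

lemma E0_abs (h0 : IsState ρ0) (hm0 : IsRankOnePVM m0) (hm1 : IsRankOnePVM m1)
    (k : ℕ) (f : Bool → (Fin k → Fin d) → ℝ) :
    |E0 ρ0 ρ1 m0 m1 k f| ≤ E0 ρ0 ρ1 m0 m1 k (fun b x => |f b x|) := by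
  unfold E0
  refine le_trans (Finset.abs_sum_le_sum_abs _ _) ?_
  refine Finset.sum_le_sum fun b _ => ?_
  refine le_trans (Finset.abs_sum_le_sum_abs _ _) ?_
  refine Finset.sum_le_sum fun x _ => ?_
  rw [abs_mul, abs_of_nonneg (pathProb_nonneg h0.1 hm0 hm1 b k x)]

end Dynamics

-- ==== END DYNAMICS AUX ====

-- ==== MOMENTS ====
section Moments

/-- One-step mean of the log-likelihood ratio under `ρ0` for measurement `m`. -/
noncomputable def stepMean (ρ0 ρ1 : Mat (Fin d)) (m : Fin d → Mat (Fin d)) : ℝ :=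
  ∑ a : Fin d, outProb ρ0 m a * llr ρ0 ρ1 m a

/-- One-step second moment. -/
noncomputable def stepSq (ρ0 ρ1 : Mat (Fin d)) (m : Fin d → Mat (Fin d)) : ℝ :=
  ∑ a : Fin d, outProb ρ0 m a * (llr ρ0 ρ1 m a) ^ 2

/-- Moment generating function of `-Z` at `t`. -/
noncomputable def mgf (ρ0 ρ1 : Mat (Fin d)) (m : Fin d → Mat (Fin d)) (t : ℝ) : ℝ :=
  ∑ a : Fin d, outProb ρ0 m a * Real.exp (-(t * llr ρ0 ρ1 m a))

/-- Indicator that the next measurement is not `m0`. -/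
noncomputable def chi (ρ0 ρ1 : Mat (Fin d)) (m0 m1 : Fin d → Mat (Fin d)) (b : Bool)
    (k : ℕ) (x : Fin k → Fin d) : ℝ :=
  if (run ρ0 ρ1 m0 m1 b k x).1 = m0 then 0 else 1

variable {ρ0 ρ1 : Mat (Fin d)} {m0 m1 : Fin d → Mat (Fin d)}

lemma step_decomp (g : (Fin d → Mat (Fin d)) → ℝ) (b : Bool) (k : ℕ) (x : Fin k → Fin d) :
    g ((run ρ0 ρ1 m0 m1 b k x).1)
      = g m0 + (g m1 - g m0) * chi ρ0 ρ1 m0 m1 b k x := by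
  unfold chi
  by_cases hM : (run ρ0 ρ1 m0 m1 b k x).1 = m0
  · rw [if_pos hM, hM]; ring
  · rw [if_neg hM]
    rcases run_fst_mem b k x (ρ0 := ρ0) (ρ1 := ρ1) (m0 := m0) (m1 := m1) with h | h
    · exact absurd h hM
    · rw [h]; ring

lemma chi_nonneg (b : Bool) (k : ℕ) (x : Fin k → Fin d) :
    0 ≤ chi ρ0 ρ1 m0 m1 b k x := by
  unfold chi; split <;> norm_num

lemma chi_le_one (b : Bool) (k : ℕ) (x : Fin k → Fin d) :
    chi ρ0 ρ1 m0 m1 b k x ≤ 1 := by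
  unfold chi; split <;> norm_num

lemma ES_succ (h0 : IsState ρ0) (hm0 : IsRankOnePVM m0) (hm1 : IsRankOnePVM m1) (k : ℕ) :
    E0 ρ0 ρ1 m0 m1 (k + 1) (fun b x => Sval ρ0 ρ1 m0 m1 b (k + 1) x)
      = E0 ρ0 ρ1 m0 m1 k (fun b y => Sval ρ0 ρ1 m0 m1 b k y
          + stepMean ρ0 ρ1 ((run ρ0 ρ1 m0 m1 b k y).1)) := by
  rw [E0_succ, E0]
  refine Finset.sum_congr rfl fun b _ => Finset.sum_congr rfl fun y _ => ?_
  congr 1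
  have h1 : ∀ a : Fin d, outProb ρ0 ((run ρ0 ρ1 m0 m1 b k y).1) a
        * Sval ρ0 ρ1 m0 m1 b (k + 1) (Fin.snoc y a)
      = outProb ρ0 ((run ρ0 ρ1 m0 m1 b k y).1) a * Sval ρ0 ρ1 m0 m1 b k y
        + outProb ρ0 ((run ρ0 ρ1 m0 m1 b k y).1) a * llr ρ0 ρ1 ((run ρ0 ρ1 m0 m1 b k y).1) a := by
    intro a
    rw [Sval_snoc]
    ring
  rw [Finset.sum_congr rfl fun a _ => h1 a, Finset.sum_add_distrib, ← Finset.sum_mul,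
    sum_q_one h0 hm0 hm1, one_mul, stepMean]

lemma ES2_succ (h0 : IsState ρ0) (hm0 : IsRankOnePVM m0) (hm1 : IsRankOnePVM m1) (k : ℕ) :
    E0 ρ0 ρ1 m0 m1 (k + 1) (fun b x => (Sval ρ0 ρ1 m0 m1 b (k + 1) x) ^ 2)
      = E0 ρ0 ρ1 m0 m1 k (fun b y => (Sval ρ0 ρ1 m0 m1 b k y) ^ 2
          + 2 * (Sval ρ0 ρ1 m0 m1 b k y * stepMean ρ0 ρ1 ((run ρ0 ρ1 m0 m1 b k y).1))
          + stepSq ρ0 ρ1 ((run ρ0 ρ1 m0 m1 b k y).1)) := by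
  rw [E0_succ, E0]
  refine Finset.sum_congr rfl fun b _ => Finset.sum_congr rfl fun y _ => ?_
  congr 1
  have h1 : ∀ a : Fin d, outProb ρ0 ((run ρ0 ρ1 m0 m1 b k y).1) a
        * (Sval ρ0 ρ1 m0 m1 b (k + 1) (Fin.snoc y a)) ^ 2
      = outProb ρ0 ((run ρ0 ρ1 m0 m1 b k y).1) a * (Sval ρ0 ρ1 m0 m1 b k y) ^ 2
        + 2 * Sval ρ0 ρ1 m0 m1 b k y *
            (outProb ρ0 ((run ρ0 ρ1 m0 m1 b k y).1) a * llr ρ0 ρ1 ((run ρ0 ρ1 m0 m1 b k y).1) a)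
        + outProb ρ0 ((run ρ0 ρ1 m0 m1 b k y).1) a
          * (llr ρ0 ρ1 ((run ρ0 ρ1 m0 m1 b k y).1) a) ^ 2 := by
    intro a
    rw [Sval_snoc]
    ring
  rw [Finset.sum_congr rfl fun a _ => h1 a, Finset.sum_add_distrib, Finset.sum_add_distrib,
    ← Finset.sum_mul, ← Finset.mul_sum, sum_q_one h0 hm0 hm1, one_mul, stepMean, stepSq]
  ring

lemma G_succ (k : ℕ) (t : ℝ) :
    E0 ρ0 ρ1 m0 m1 (k + 1) (fun b x => Real.exp (-(t * Sval ρ0 ρ1 m0 m1 b (k + 1) x)))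
      = E0 ρ0 ρ1 m0 m1 k (fun b y => Real.exp (-(t * Sval ρ0 ρ1 m0 m1 b k y))
          * mgf ρ0 ρ1 ((run ρ0 ρ1 m0 m1 b k y).1) t) := by
  rw [E0_succ, E0]
  refine Finset.sum_congr rfl fun b _ => Finset.sum_congr rfl fun y _ => ?_
  congr 1
  have h1 : ∀ a : Fin d, outProb ρ0 ((run ρ0 ρ1 m0 m1 b k y).1) a
        * Real.exp (-(t * Sval ρ0 ρ1 m0 m1 b (k + 1) (Fin.snoc y a)))
      = Real.exp (-(t * Sval ρ0 ρ1 m0 m1 b k y)) * (outProb ρ0 ((run ρ0 ρ1 m0 m1 b k y).1) a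
          * Real.exp (-(t * llr ρ0 ρ1 ((run ρ0 ρ1 m0 m1 b k y).1) a))) := by
    intro a
    rw [Sval_snoc]
    rw [show -(t * (Sval ρ0 ρ1 m0 m1 b k y + llr ρ0 ρ1 ((run ρ0 ρ1 m0 m1 b k y).1) a))
      = -(t * Sval ρ0 ρ1 m0 m1 b k y) + -(t * llr ρ0 ρ1 ((run ρ0 ρ1 m0 m1 b k y).1) a) by ring]
    rw [Real.exp_add]
    ring
  rw [Finset.sum_congr rfl fun a _ => h1 a, ← Finset.mul_sum, mgf]

end Moments
-- ==== END MOMENTS ====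

-- ==== ANALYSIS ====
section Analysis

/-- Uniform bound on the one-step log-likelihood ratios. -/
noncomputable def llrBound (ρ0 ρ1 : Mat (Fin d)) (m0 m1 : Fin d → Mat (Fin d)) : ℝ :=
  ∑ a : Fin d, (|llr ρ0 ρ1 m0 a| + |llr ρ0 ρ1 m1 a|)

variable {ρ0 ρ1 : Mat (Fin d)} {m0 m1 : Fin d → Mat (Fin d)}

lemma llrBound_nonneg : 0 ≤ llrBound ρ0 ρ1 m0 m1 :=
  Finset.sum_nonneg fun a _ => by positivity

lemma abs_llr_le {m : Fin d → Mat (Fin d)} (h : m = m0 ∨ m = m1) (a : Fin d) :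
    |llr ρ0 ρ1 m a| ≤ llrBound ρ0 ρ1 m0 m1 := by
  have h1 : (|llr ρ0 ρ1 m0 a| + |llr ρ0 ρ1 m1 a|) ≤ llrBound ρ0 ρ1 m0 m1 :=
    Finset.single_le_sum (f := fun a => (|llr ρ0 ρ1 m0 a| + |llr ρ0 ρ1 m1 a|))
      (fun a _ => by positivity) (Finset.mem_univ a)
  rcases h with rfl | rfl
  · have := abs_nonneg (llr ρ0 ρ1 m1 a); linarith
  · have := abs_nonneg (llr ρ0 ρ1 m0 a); linarith

lemma abs_Sval_le (b : Bool) (k : ℕ) (x : Fin k → Fin d) :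
    |Sval ρ0 ρ1 m0 m1 b k x| ≤ k * llrBound ρ0 ρ1 m0 m1 := by
  induction k with
  | zero => rw [Sval_zero]; simp
  | succ k ih =>
      rw [← Fin.snoc_init_self x, Sval_snoc]
      refine le_trans (abs_add_le _ _) ?_
      have h1 := ih (Fin.init x)
      have h2 := abs_llr_le (ρ0 := ρ0) (ρ1 := ρ1) (run_fst_mem b k (Fin.init x)
        (ρ0 := ρ0) (ρ1 := ρ1) (m0 := m0) (m1 := m1)) (x (Fin.last k))
      push_cast
      linarith

lemma mgf_zero (h0 : IsState ρ0) {m : Fin d → Mat (Fin d)} (hm : IsRankOnePVM m) :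
    mgf ρ0 ρ1 m 0 = 1 := by
  unfold mgf
  simp only [zero_mul, neg_zero, Real.exp_zero, mul_one]
  exact sum_outProb h0 hm.2.1

lemma mgf_nonneg (h0 : IsState ρ0) {m : Fin d → Mat (Fin d)} (hm : IsRankOnePVM m) (t : ℝ) :
    0 ≤ mgf ρ0 ρ1 m t :=
  Finset.sum_nonneg fun a _ =>
    mul_nonneg (outProb_nonneg h0.1 hm.1 a) (le_of_lt (Real.exp_pos _))

lemma mgf_hasDeriv (m : Fin d → Mat (Fin d)) :
    HasDerivAt (mgf ρ0 ρ1 m) (-stepMean ρ0 ρ1 m) 0 := by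
  have key : ∀ a : Fin d, HasDerivAt
      (fun t : ℝ => outProb ρ0 m a * Real.exp (-(t * llr ρ0 ρ1 m a)))
      (outProb ρ0 m a * (-(llr ρ0 ρ1 m a))) 0 := by
    intro a
    have h1 : HasDerivAt (fun t : ℝ => -(t * llr ρ0 ρ1 m a)) (-(llr ρ0 ρ1 m a)) 0 := by
      have := ((hasDerivAt_id' (0:ℝ)).mul_const (llr ρ0 ρ1 m a)).neg; rwa [one_mul] at this
    have h2 := h1.exp
    simp only [zero_mul, neg_zero, Real.exp_zero, one_mul] at h2
    simpa using h2.const_mul (outProb ρ0 m a)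
  have hsum := HasDerivAt.fun_sum (u := Finset.univ) (fun a _ => key a)
  have heq : ∑ a : Fin d, outProb ρ0 m a * (-(llr ρ0 ρ1 m a)) = -stepMean ρ0 ρ1 m := by
    rw [stepMean, ← Finset.sum_neg_distrib]
    exact Finset.sum_congr rfl fun a _ => by ring
  rw [heq] at hsum
  exact hsum

lemma exists_mgf_bound (h0 : IsState ρ0) (hm0 : IsRankOnePVM m0) (hm1 : IsRankOnePVM m1)
    (hmu0 : 0 < stepMean ρ0 ρ1 m0) (hmu1 : 0 < stepMean ρ0 ρ1 m1) :
    ∃ t r : ℝ, 0 < t ∧ 0 ≤ r ∧ r < 1 ∧ mgf ρ0 ρ1 m0 t ≤ r ∧ mgf ρ0 ρ1 m1 t ≤ r := by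
  have key : ∀ m : Fin d → Mat (Fin d), IsRankOnePVM m → 0 < stepMean ρ0 ρ1 m →
      ∀ᶠ t in nhdsWithin (0:ℝ) (Set.Ioi 0), mgf ρ0 ρ1 m t < 1 := by
    intro m hm hmu
    have hder := mgf_hasDeriv (ρ0 := ρ0) (ρ1 := ρ1) m
    have hslope := hasDerivAt_iff_tendsto_slope.mp hder
    have hev : ∀ᶠ t in nhdsWithin (0:ℝ) {(0:ℝ)}ᶜ, slope (mgf ρ0 ρ1 m) 0 t < 0 :=
      hslope.eventually (gt_mem_nhds (by linarith))
    have hmono : nhdsWithin (0:ℝ) (Set.Ioi 0) ≤ nhdsWithin (0:ℝ) {(0:ℝ)}ᶜ :=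
      nhdsWithin_mono 0 (fun t ht => ne_of_gt ht)
    filter_upwards [hmono hev, self_mem_nhdsWithin] with t hts htpos
    have hslope_eq : slope (mgf ρ0 ρ1 m) 0 t = (mgf ρ0 ρ1 m t - mgf ρ0 ρ1 m 0) / t := by
      rw [slope_def_field]
      rw [sub_zero]
    rw [hslope_eq] at hts
    have htpos' : (0:ℝ) < t := htpos
    have hnum : mgf ρ0 ρ1 m t - mgf ρ0 ρ1 m 0 < 0 := by
      by_contra hc
      push_neg at hc
      exact absurd (div_nonneg hc (le_of_lt htpos')) (not_le.mpr hts)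
    rw [mgf_zero h0 hm] at hnum
    linarith
  obtain ⟨t, h1, h2, h3⟩ :=
    ((key m0 hm0 hmu0).and ((key m1 hm1 hmu1).and self_mem_nhdsWithin)).exists
  refine ⟨t, max (mgf ρ0 ρ1 m0 t) (mgf ρ0 ρ1 m1 t), h3, ?_, max_lt h1 h2,
    le_max_left _ _, le_max_right _ _⟩
  exact le_trans (mgf_nonneg h0 hm0 t) (le_max_left _ _)

lemma G_le (h0 : IsState ρ0) (hm0 : IsRankOnePVM m0) (hm1 : IsRankOnePVM m1)
    {t r : ℝ} (hr0 : 0 ≤ r) (hg0 : mgf ρ0 ρ1 m0 t ≤ r) (hg1 : mgf ρ0 ρ1 m1 t ≤ r) (k : ℕ) :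
    E0 ρ0 ρ1 m0 m1 k (fun b x => Real.exp (-(t * Sval ρ0 ρ1 m0 m1 b k x))) ≤ r ^ k := by
  induction k with
  | zero =>
      rw [pow_zero]
      have h1 : E0 ρ0 ρ1 m0 m1 0 (fun b x => Real.exp (-(t * Sval ρ0 ρ1 m0 m1 b 0 x)))
          = E0 ρ0 ρ1 m0 m1 0 (fun _ _ => (1:ℝ)) :=
        E0_congr 0 fun b x => by rw [Sval_zero]; simp
      rw [h1, E0_const h0 hm0 hm1]
  | succ k ih =>
      rw [G_succ]
      have hstep : E0 ρ0 ρ1 m0 m1 k (fun b y => Real.exp (-(t * Sval ρ0 ρ1 m0 m1 b k y))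
            * mgf ρ0 ρ1 ((run ρ0 ρ1 m0 m1 b k y).1) t)
          ≤ E0 ρ0 ρ1 m0 m1 k (fun b y => r * Real.exp (-(t * Sval ρ0 ρ1 m0 m1 b k y))) := by
        refine E0_mono h0 hm0 hm1 k fun b y => ?_
        rw [mul_comm r]
        refine mul_le_mul_of_nonneg_left ?_ (le_of_lt (Real.exp_pos _))
        rcases run_fst_mem b k y (ρ0 := ρ0) (ρ1 := ρ1) (m0 := m0) (m1 := m1) with h | h <;>
          rw [h]
        · exact hg0
        · exact hg1
      refine le_trans hstep ?_
      rw [E0_smul]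
      calc r * E0 ρ0 ρ1 m0 m1 k (fun b y => Real.exp (-(t * Sval ρ0 ρ1 m0 m1 b k y)))
          ≤ r * r ^ k := mul_le_mul_of_nonneg_left ih hr0
        _ = r ^ (k + 1) := by rw [pow_succ]; ring

lemma chi_le_exp {t : ℝ} (ht : 0 < t) (b : Bool) (k : ℕ) (x : Fin k → Fin d) :
    chi ρ0 ρ1 m0 m1 b k x ≤ Real.exp (-(t * Sval ρ0 ρ1 m0 m1 b k x)) := by
  unfold chi
  split
  · exact le_of_lt (Real.exp_pos _)
  · next h =>
    cases k with
    | zero => rw [Sval_zero]; simp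
    | succ k =>
        have hS := Sval_neg_of_ne b k x h
        have : (0:ℝ) ≤ -(t * Sval ρ0 ρ1 m0 m1 b (k+1) x) := by nlinarith
        exact Real.one_le_exp this

lemma abs_S_chi_le_exp {t : ℝ} (ht : 0 < t) (b : Bool) (k : ℕ) (x : Fin k → Fin d) :
    |Sval ρ0 ρ1 m0 m1 b k x| * chi ρ0 ρ1 m0 m1 b k x
      ≤ Real.exp (-(t * Sval ρ0 ρ1 m0 m1 b k x)) / t := by
  unfold chi
  split
  · rw [mul_zero]
    positivity
  · next h =>
    rw [mul_one]
    cases k with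
    | zero =>
        rw [Sval_zero]
        simp only [abs_zero, mul_zero, neg_zero, Real.exp_zero]
        positivity
    | succ k =>
        have hS := Sval_neg_of_ne b k x h
        rw [abs_of_neg hS]
        rw [le_div_iff₀ ht]
        have h1 := Real.add_one_le_exp (-(t * Sval ρ0 ρ1 m0 m1 b (k+1) x))
        nlinarith

end Analysis
-- ==== END ANALYSIS ====

-- ==== SEQUENCES ====

lemma KL_self (P : Fin d → ℝ) : KL P P = 0 := by
  unfold KL
  refine Finset.sum_eq_zero fun x _ => ?_
  split
  · rfl
  · next h => rw [div_self h, Real.log_one, mul_zero]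

lemma expand_var {ι : Type*} [Fintype ι] (p f : ι → ℝ) (hp : ∑ i, p i = 1) :
    ∑ i, p i * (f i - ∑ j, p j * f j) ^ 2
      = ∑ i, p i * (f i) ^ 2 - (∑ i, p i * f i) ^ 2 := by
  have h1 : ∑ i, p i * (f i - ∑ j, p j * f j) ^ 2
      = ∑ i, (p i * (f i) ^ 2 - (2 * ∑ j, p j * f j) * (p i * f i)
          + (∑ j, p j * f j) ^ 2 * p i) :=
    Finset.sum_congr rfl fun i _ => by ring
  rw [h1, Finset.sum_add_distrib, Finset.sum_sub_distrib, ← Finset.mul_sum, ← Finset.mul_sum, hp]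
  ring

section Seqs

variable (ρ0 ρ1 : Mat (Fin d)) (m0 m1 : Fin d → Mat (Fin d))

/-- `E_0[S_k]`. -/
noncomputable def ESn (k : ℕ) : ℝ :=
  E0 ρ0 ρ1 m0 m1 k (fun b x => Sval ρ0 ρ1 m0 m1 b k x)

/-- `E_0[S_k^2]`. -/
noncomputable def ES2n (k : ℕ) : ℝ :=
  E0 ρ0 ρ1 m0 m1 k (fun b x => (Sval ρ0 ρ1 m0 m1 b k x) ^ 2)

/-- `P_0(M_{k+1} ≠ m0)`. -/
noncomputable def epsn (k : ℕ) : ℝ :=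
  E0 ρ0 ρ1 m0 m1 k (fun b x => chi ρ0 ρ1 m0 m1 b k x)

/-- `E_0[S_k 1(M_{k+1} ≠ m0)]`. -/
noncomputable def EXn (k : ℕ) : ℝ :=
  E0 ρ0 ρ1 m0 m1 k (fun b x => Sval ρ0 ρ1 m0 m1 b k x * chi ρ0 ρ1 m0 m1 b k x)

/-- `E_0[exp(-t S_k)]`. -/
noncomputable def Gn (t : ℝ) (k : ℕ) : ℝ :=
  E0 ρ0 ρ1 m0 m1 k (fun b x => Real.exp (-(t * Sval ρ0 ρ1 m0 m1 b k x)))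

/-- `Var_0(S_k)`. -/
noncomputable def Vn (k : ℕ) : ℝ :=
  E0 ρ0 ρ1 m0 m1 k (fun b x => (Sval ρ0 ρ1 m0 m1 b k x - ESn ρ0 ρ1 m0 m1 k) ^ 2)

end Seqs

section SeqLemmas

variable {ρ0 ρ1 : Mat (Fin d)} {m0 m1 : Fin d → Mat (Fin d)}
variable (h0 : IsState ρ0) (hm0 : IsRankOnePVM m0) (hm1 : IsRankOnePVM m1)

include h0 hm0 hm1

lemma L_var (k : ℕ) :
    Vn ρ0 ρ1 m0 m1 k = ES2n ρ0 ρ1 m0 m1 k - (ESn ρ0 ρ1 m0 m1 k) ^ 2 := by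
  unfold Vn
  have h1 : ∀ (b : Bool) (x : Fin k → Fin d),
      (Sval ρ0 ρ1 m0 m1 b k x - ESn ρ0 ρ1 m0 m1 k) ^ 2
        = (Sval ρ0 ρ1 m0 m1 b k x) ^ 2 + ((-2 * ESn ρ0 ρ1 m0 m1 k) * Sval ρ0 ρ1 m0 m1 b k x
            + (ESn ρ0 ρ1 m0 m1 k) ^ 2) := fun b x => by ring
  rw [E0_congr _ h1, E0_add, E0_add, E0_smul, E0_const h0 hm0 hm1]
  unfold ES2n ESn
  ring

lemma L_ES0 : ESn ρ0 ρ1 m0 m1 0 = 0 := by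
  unfold ESn
  have h1 : ∀ (b : Bool) (x : Fin 0 → Fin d),
      Sval ρ0 ρ1 m0 m1 b 0 x = (0 : ℝ) := fun b x => Sval_zero b x
  rw [E0_congr _ h1, E0_const h0 hm0 hm1]

lemma L_V0 : Vn ρ0 ρ1 m0 m1 0 = 0 := by
  have h2 := L_ES0 h0 hm0 hm1 (ρ1 := ρ1) (m1 := m1)
  unfold Vn
  have h1 : ∀ (b : Bool) (x : Fin 0 → Fin d),
      (Sval ρ0 ρ1 m0 m1 b 0 x - ESn ρ0 ρ1 m0 m1 0) ^ 2 = (0 : ℝ) := by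
    intro b x
    rw [Sval_zero, h2]
    ring
  rw [E0_congr _ h1, E0_const h0 hm0 hm1]

lemma L_ESrec (k : ℕ) :
    ESn ρ0 ρ1 m0 m1 (k + 1) = ESn ρ0 ρ1 m0 m1 k
      + (stepMean ρ0 ρ1 m0
          + (stepMean ρ0 ρ1 m1 - stepMean ρ0 ρ1 m0) * epsn ρ0 ρ1 m0 m1 k) := by
  unfold ESn epsn
  rw [ES_succ h0 hm0 hm1 k]
  have h1 : ∀ (b : Bool) (y : Fin k → Fin d),
      Sval ρ0 ρ1 m0 m1 b k y + stepMean ρ0 ρ1 ((run ρ0 ρ1 m0 m1 b k y).1)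
        = Sval ρ0 ρ1 m0 m1 b k y + (stepMean ρ0 ρ1 m0
            + (stepMean ρ0 ρ1 m1 - stepMean ρ0 ρ1 m0) * chi ρ0 ρ1 m0 m1 b k y) :=
    fun b y => by rw [step_decomp (stepMean ρ0 ρ1) b k y]
  rw [E0_congr _ h1, E0_add, E0_add, E0_const h0 hm0 hm1, E0_smul]

lemma L_ES2rec (k : ℕ) :
    ES2n ρ0 ρ1 m0 m1 (k + 1) = ES2n ρ0 ρ1 m0 m1 k
      + 2 * (stepMean ρ0 ρ1 m0 * ESn ρ0 ρ1 m0 m1 k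
          + (stepMean ρ0 ρ1 m1 - stepMean ρ0 ρ1 m0) * EXn ρ0 ρ1 m0 m1 k)
      + (stepSq ρ0 ρ1 m0 + (stepSq ρ0 ρ1 m1 - stepSq ρ0 ρ1 m0) * epsn ρ0 ρ1 m0 m1 k) := by
  unfold ES2n ESn EXn epsn
  rw [ES2_succ h0 hm0 hm1 k]
  have h1 : ∀ (b : Bool) (y : Fin k → Fin d),
      (Sval ρ0 ρ1 m0 m1 b k y) ^ 2
        + 2 * (Sval ρ0 ρ1 m0 m1 b k y * stepMean ρ0 ρ1 ((run ρ0 ρ1 m0 m1 b k y).1))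
        + stepSq ρ0 ρ1 ((run ρ0 ρ1 m0 m1 b k y).1)
      = (Sval ρ0 ρ1 m0 m1 b k y) ^ 2
        + ((2 * stepMean ρ0 ρ1 m0) * Sval ρ0 ρ1 m0 m1 b k y
          + ((2 * (stepMean ρ0 ρ1 m1 - stepMean ρ0 ρ1 m0))
              * (Sval ρ0 ρ1 m0 m1 b k y * chi ρ0 ρ1 m0 m1 b k y)
            + (stepSq ρ0 ρ1 m0
              + (stepSq ρ0 ρ1 m1 - stepSq ρ0 ρ1 m0) * chi ρ0 ρ1 m0 m1 b k y))) := by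
    intro b y
    rw [step_decomp (stepMean ρ0 ρ1) b k y, step_decomp (stepSq ρ0 ρ1) b k y]
    ring
  rw [E0_congr _ h1, E0_add, E0_add, E0_add, E0_add, E0_smul, E0_smul, E0_smul,
    E0_const h0 hm0 hm1]
  ring

lemma L_ESbound (k : ℕ) :
    |ESn ρ0 ρ1 m0 m1 k| ≤ (k : ℝ) * llrBound ρ0 ρ1 m0 m1 := by
  unfold ESn
  refine le_trans (E0_abs h0 hm0 hm1 k _) ?_
  refine le_trans (E0_mono h0 hm0 hm1 k fun b x => abs_Sval_le b k x) ?_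
  exact le_of_eq (E0_const h0 hm0 hm1 k _)

lemma L_eps_nonneg (k : ℕ) : 0 ≤ epsn ρ0 ρ1 m0 m1 k :=
  E0_nonneg h0 hm0 hm1 k fun b x => chi_nonneg b k x

lemma L_eps_le_G {t : ℝ} (ht : 0 < t) (k : ℕ) :
    epsn ρ0 ρ1 m0 m1 k ≤ Gn ρ0 ρ1 m0 m1 t k :=
  E0_mono h0 hm0 hm1 k fun b x => chi_le_exp ht b k x

lemma L_EX_le {t : ℝ} (ht : 0 < t) (k : ℕ) :
    |EXn ρ0 ρ1 m0 m1 k| ≤ Gn ρ0 ρ1 m0 m1 t k / t := by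
  unfold EXn
  refine le_trans (E0_abs h0 hm0 hm1 k _) ?_
  have h1 : ∀ (b : Bool) (x : Fin k → Fin d),
      |Sval ρ0 ρ1 m0 m1 b k x * chi ρ0 ρ1 m0 m1 b k x|
        ≤ (1 / t) * Real.exp (-(t * Sval ρ0 ρ1 m0 m1 b k x)) := by
    intro b x
    rw [abs_mul, abs_of_nonneg (chi_nonneg b k x)]
    rw [one_div, inv_mul_eq_div]
    exact abs_S_chi_le_exp ht b k x
  refine le_trans (E0_mono h0 hm0 hm1 k h1) ?_
  rw [E0_smul]
  rw [Gn]
  rw [one_div, inv_mul_eq_div]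

lemma L_G_le {t r : ℝ} (hr0 : 0 ≤ r) (hg0 : mgf ρ0 ρ1 m0 t ≤ r) (hg1 : mgf ρ0 ρ1 m1 t ≤ r)
    (k : ℕ) : Gn ρ0 ρ1 m0 m1 t k ≤ r ^ k :=
  G_le h0 hm0 hm1 hr0 hg0 hg1 k

lemma L_G_nonneg (t : ℝ) (k : ℕ) : 0 ≤ Gn ρ0 ρ1 m0 m1 t k :=
  E0_nonneg h0 hm0 hm1 k fun b x => le_of_lt (Real.exp_pos _)

end SeqLemmas
-- ==== END SEQUENCES ====

/-- Lemma 13(v) in the paper: for the sign-adaptive SQPRT,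
`E_0[(S_k − E_0[S_k])²]/k → Var(W₀)` as `k → ∞`. -/
theorem sign_adaptive_variance_convergence
    (d : ℕ) (hd : 0 < d) (ρ0 ρ1 : Mat (Fin d))
    (h0 : IsState ρ0) (h1 : IsState ρ1)
    (hfs0 : ρ0.PosDef) (hfs1 : ρ1.PosDef) (hne : ρ0 ≠ ρ1)
    (m0 m1 : Fin d → Mat (Fin d))
    (hm0 : IsRankOnePVM m0) (hm1 : IsRankOnePVM m1)
    (hopt0 : KL (outProb ρ0 m0) (outProb ρ1 m0) = Dmeas ρ0 ρ1)
    (hopt1 : KL (outProb ρ1 m1) (outProb ρ0 m1) = Dmeas ρ1 ρ0) :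
    Tendsto (fun k : ℕ =>
        E0 ρ0 ρ1 m0 m1 k (fun b x =>
          (Sval ρ0 ρ1 m0 m1 b k x -
            E0 ρ0 ρ1 m0 m1 k (fun b' x' => Sval ρ0 ρ1 m0 m1 b' k x')) ^ 2) / (k : ℝ))
      atTop (nhds (varW0 ρ0 ρ1 m0)) := by
  classical
  -- positivity of the two conditional drifts
  have hmu0 : 0 < stepMean ρ0 ρ1 m0 := by
    have hP0 := outProb_pos_of_pvm hfs0 hm0
    have hQ0 := outProb_pos_of_pvm hfs1 hm0
    unfold stepMean llr
    rw [← KL_eq_sum hP0 hQ0, hopt0]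
    exact dmeas_pos hd h0 h1 hfs0 hfs1 hne
  have hmu1 : 0 < stepMean ρ0 ρ1 m1 := by
    have hP := outProb_pos_of_pvm hfs0 hm1
    have hQ := outProb_pos_of_pvm hfs1 hm1
    unfold stepMean llr
    refine gibbs_pos hP hQ (sum_outProb h0 hm1.2.1) (sum_outProb h1 hm1.2.1) ?_
    intro hEq
    have hKL0 : KL (outProb ρ1 m1) (outProb ρ0 m1) = 0 := by
      rw [hEq]
      exact KL_self _
    rw [hopt1] at hKL0
    exact absurd hKL0 (ne_of_gt (dmeas_pos hd h1 h0 hfs1 hfs0 (Ne.symm hne)))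
  -- Chernoff parameters
  obtain ⟨t, r, ht, hr0, hr1, hg0, hg1⟩ := exists_mgf_bound h0 hm0 hm1 hmu0 hmu1
  -- limits of the error terms
  have hrpow : Tendsto (fun k : ℕ => r ^ k) atTop (nhds 0) :=
    tendsto_pow_atTop_nhds_zero_of_lt_one hr0 hr1
  have heps_lim : Tendsto (fun k => epsn ρ0 ρ1 m0 m1 k) atTop (nhds 0) := by
    refine squeeze_zero (fun k => L_eps_nonneg h0 hm0 hm1 k) (fun k => ?_) hrpow
    exact le_trans (L_eps_le_G h0 hm0 hm1 ht k) (L_G_le h0 hm0 hm1 hr0 hg0 hg1 k)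
  have hEX_lim : Tendsto (fun k => EXn ρ0 ρ1 m0 m1 k) atTop (nhds 0) := by
    have hb : ∀ k : ℕ, ‖EXn ρ0 ρ1 m0 m1 k‖ ≤ r ^ k / t := by
      intro k
      rw [Real.norm_eq_abs]
      refine le_trans (L_EX_le h0 hm0 hm1 ht k) ?_
      have hGle := L_G_le h0 hm0 hm1 hr0 hg0 hg1 k
      gcongr
    have hg : Tendsto (fun k : ℕ => r ^ k / t) atTop (nhds 0) := by
      simpa using hrpow.div_const t
    exact squeeze_zero_norm hb hg
  have hESeps_lim : Tendsto
      (fun k => ESn ρ0 ρ1 m0 m1 k * epsn ρ0 ρ1 m0 m1 k) atTop (nhds 0) := by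
    have hb : ∀ k : ℕ, ‖ESn ρ0 ρ1 m0 m1 k * epsn ρ0 ρ1 m0 m1 k‖
        ≤ llrBound ρ0 ρ1 m0 m1 * ((k : ℝ) ^ 1 * r ^ k) := by
      intro k
      rw [Real.norm_eq_abs, abs_mul, abs_of_nonneg (L_eps_nonneg h0 hm0 hm1 k)]
      have h1 := L_ESbound (ρ1 := ρ1) h0 hm0 hm1 k
      have h2 : epsn ρ0 ρ1 m0 m1 k ≤ r ^ k :=
        le_trans (L_eps_le_G h0 hm0 hm1 ht k) (L_G_le h0 hm0 hm1 hr0 hg0 hg1 k)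
      have h3 : (0:ℝ) ≤ (k : ℝ) * llrBound ρ0 ρ1 m0 m1 :=
        mul_nonneg (Nat.cast_nonneg k) llrBound_nonneg
      calc |ESn ρ0 ρ1 m0 m1 k| * epsn ρ0 ρ1 m0 m1 k
          ≤ ((k : ℝ) * llrBound ρ0 ρ1 m0 m1) * r ^ k :=
            mul_le_mul h1 h2 (L_eps_nonneg h0 hm0 hm1 k) h3
        _ = llrBound ρ0 ρ1 m0 m1 * ((k : ℝ) ^ 1 * r ^ k) := by ring
    have hg : Tendsto (fun k : ℕ => llrBound ρ0 ρ1 m0 m1 * ((k : ℝ) ^ 1 * r ^ k))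
        atTop (nhds 0) := by
      have := (tendsto_pow_const_mul_const_pow_of_lt_one 1 hr0 hr1).const_mul
        (llrBound ρ0 ρ1 m0 m1)
      simpa using this
    exact squeeze_zero_norm hb hg
  have hepssq_lim : Tendsto
      (fun k => epsn ρ0 ρ1 m0 m1 k * epsn ρ0 ρ1 m0 m1 k) atTop (nhds 0) := by
    simpa using heps_lim.mul heps_lim
  -- the one-step variance increment
  have hdiff : ∀ k : ℕ, Vn ρ0 ρ1 m0 m1 (k + 1) - Vn ρ0 ρ1 m0 m1 k
      = varW0 ρ0 ρ1 m0
        + (2 * (stepMean ρ0 ρ1 m1 - stepMean ρ0 ρ1 m0) * EXn ρ0 ρ1 m0 m1 k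
          + (stepSq ρ0 ρ1 m1 - stepSq ρ0 ρ1 m0) * epsn ρ0 ρ1 m0 m1 k
          - (stepMean ρ0 ρ1 m1 - stepMean ρ0 ρ1 m0) ^ 2
              * (epsn ρ0 ρ1 m0 m1 k * epsn ρ0 ρ1 m0 m1 k)
          - 2 * (stepMean ρ0 ρ1 m1 - stepMean ρ0 ρ1 m0)
              * (ESn ρ0 ρ1 m0 m1 k * epsn ρ0 ρ1 m0 m1 k)
          - 2 * stepMean ρ0 ρ1 m0 * (stepMean ρ0 ρ1 m1 - stepMean ρ0 ρ1 m0)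
              * epsn ρ0 ρ1 m0 m1 k) := by
    intro k
    have hv1 := L_var h0 hm0 hm1 (k + 1) (ρ1 := ρ1) (m1 := m1)
    have hv2 := L_var h0 hm0 hm1 k (ρ1 := ρ1) (m1 := m1)
    have he := L_ESrec (ρ1 := ρ1) h0 hm0 hm1 k
    have he2 := L_ES2rec (ρ1 := ρ1) h0 hm0 hm1 k
    have hvar0 : varW0 ρ0 ρ1 m0 = stepSq ρ0 ρ1 m0 - (stepMean ρ0 ρ1 m0) ^ 2 := by
      unfold varW0 stepSq stepMean meanW0
      exact expand_var (outProb ρ0 m0) (llr ρ0 ρ1 m0) (sum_outProb h0 hm0.2.1)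
    rw [hv1, hv2, he, he2, hvar0]
    ring
  have herr : Tendsto (fun k =>
      2 * (stepMean ρ0 ρ1 m1 - stepMean ρ0 ρ1 m0) * EXn ρ0 ρ1 m0 m1 k
        + (stepSq ρ0 ρ1 m1 - stepSq ρ0 ρ1 m0) * epsn ρ0 ρ1 m0 m1 k
        - (stepMean ρ0 ρ1 m1 - stepMean ρ0 ρ1 m0) ^ 2
            * (epsn ρ0 ρ1 m0 m1 k * epsn ρ0 ρ1 m0 m1 k)
        - 2 * (stepMean ρ0 ρ1 m1 - stepMean ρ0 ρ1 m0)
            * (ESn ρ0 ρ1 m0 m1 k * epsn ρ0 ρ1 m0 m1 k)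
        - 2 * stepMean ρ0 ρ1 m0 * (stepMean ρ0 ρ1 m1 - stepMean ρ0 ρ1 m0)
            * epsn ρ0 ρ1 m0 m1 k) atTop (nhds 0) := by
    have hh1 := hEX_lim.const_mul (2 * (stepMean ρ0 ρ1 m1 - stepMean ρ0 ρ1 m0))
    have hh2 := heps_lim.const_mul (stepSq ρ0 ρ1 m1 - stepSq ρ0 ρ1 m0)
    have hh3 := hepssq_lim.const_mul ((stepMean ρ0 ρ1 m1 - stepMean ρ0 ρ1 m0) ^ 2)
    have hh4 := hESeps_lim.const_mul (2 * (stepMean ρ0 ρ1 m1 - stepMean ρ0 ρ1 m0))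
    have hh5 := heps_lim.const_mul
      (2 * stepMean ρ0 ρ1 m0 * (stepMean ρ0 ρ1 m1 - stepMean ρ0 ρ1 m0))
    have hcomb := (((hh1.add hh2).sub hh3).sub hh4).sub hh5
    simpa using hcomb
  have hdiff_lim : Tendsto (fun k => Vn ρ0 ρ1 m0 m1 (k + 1) - Vn ρ0 ρ1 m0 m1 k)
      atTop (nhds (varW0 ρ0 ρ1 m0)) := by
    have hca := herr.const_add (varW0 ρ0 ρ1 m0)
    rw [add_zero] at hca
    exact hca.congr fun k => (hdiff k).symm
  have hces := hdiff_lim.cesaro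
  refine hces.congr fun k => ?_
  have htel : ∑ i ∈ Finset.range k, (Vn ρ0 ρ1 m0 m1 (i + 1) - Vn ρ0 ρ1 m0 m1 i)
      = Vn ρ0 ρ1 m0 m1 k := by
    rw [Finset.sum_range_sub (fun i => Vn ρ0 ρ1 m0 m1 i), L_V0 h0 hm0 hm1, sub_zero]
  rw [htel, inv_mul_eq_div]
  rfl

end SQHT
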